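/- All three series \(S_1 = \sum_{n=0}^{\infty} \frac{q^n \zeta}{(1 - q^n \zeta)^2}\), \(S_2 = \sum_{n=1}^{\infty} \frac{q^{-n} \zeta}{(1 - q^{-n} \zeta)^2}\) and \(S_3 = 2\sum_{n=1}^{\infty} \frac{n q^n}{1 - q^n}\) converge in K, and the Tate x-coordinate \(x(\zeta) = S_1 + S_2 - S_3\) satisfies \(|x(\zeta)| \le \max\{\, |\zeta|,\ |q| \cdot |\zeta|^{-1} \,\}\). -/

import Mathlib

section Aux

variable {K : Type*} [NormedField K] [IsUltrametricDist K]

lemma aux_norm_sub_le_max (x y : K) : ‖x - y‖ ≤ max ‖x‖ ‖y‖ := by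
  rw [sub_eq_add_neg]
  simpa using IsUltrametricDist.norm_add_le_max x (-y)

lemma aux_norm_one_sub_small {x : K} (hx : ‖x‖ < 1) : ‖1 - x‖ = 1 := by
  have h := IsUltrametricDist.norm_add_eq_max_of_norm_ne_norm (x := (1 : K)) (y := -x)
    (by rw [norm_neg, norm_one]; exact hx.ne')
  rw [← sub_eq_add_neg] at h
  rw [h, norm_neg, norm_one, max_eq_left hx.le]

lemma aux_norm_one_sub_big {x : K} (hx : 1 < ‖x‖) : ‖1 - x‖ = ‖x‖ := by
  have h := IsUltrametricDist.norm_add_eq_max_of_norm_ne_norm (x := (1 : K)) (y := -x)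
    (by rw [norm_neg, norm_one]; exact (ne_of_lt hx))
  rw [← sub_eq_add_neg] at h
  rw [h, norm_neg, norm_one, max_eq_right hx.le]

end Aux

/-- Equation (9): for a complete nonarchimedean field `K`, `q ∈ K` with `0 < |q| < 1`
and `ζ ∈ K` with `|q| < |ζ| < 1`, the three series `S₁ = ∑_{n≥0} qⁿζ/(1-qⁿζ)²`,
`S₂ = ∑_{n≥1} q⁻ⁿζ/(1-q⁻ⁿζ)²` and `S₃ = 2·∑_{n≥1} n·qⁿ/(1-qⁿ)` converge, and the
Tate x-coordinate `x(ζ) = S₁ + S₂ - S₃` satisfies `|x(ζ)| ≤ max {|ζ|, |q|·|ζ|⁻¹}`. -/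
theorem tate_x_coordinate_bound {K : Type*} [NormedField K] [CompleteSpace K]
    (hu : IsUltrametricDist K) (q ζ : K)
    (hq0 : 0 < ‖q‖) (hq1 : ‖q‖ < 1) (hζl : ‖q‖ < ‖ζ‖) (hζu : ‖ζ‖ < 1) :
    Summable (fun n : ℕ => q ^ n * ζ / (1 - q ^ n * ζ) ^ 2) ∧
    Summable (fun n : ℕ => q⁻¹ ^ (n + 1) * ζ / (1 - q⁻¹ ^ (n + 1) * ζ) ^ 2) ∧
    Summable (fun n : ℕ => ((n + 1) • q ^ (n + 1)) / (1 - q ^ (n + 1))) ∧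
    ‖(∑' n : ℕ, q ^ n * ζ / (1 - q ^ n * ζ) ^ 2)
        + (∑' n : ℕ, q⁻¹ ^ (n + 1) * ζ / (1 - q⁻¹ ^ (n + 1) * ζ) ^ 2)
        - (2 : K) * ∑' n : ℕ, ((n + 1) • q ^ (n + 1)) / (1 - q ^ (n + 1))‖
      ≤ max ‖ζ‖ (‖q‖ * ‖ζ‖⁻¹) := by
  haveI := hu
  have hq : q ≠ 0 := by simpa using hq0.ne'
  have hζ0 : (0 : ℝ) < ‖ζ‖ := lt_trans hq0 hζl
  -- norms of the terms
  have hn1 : ∀ n : ℕ, ‖q ^ n * ζ / (1 - q ^ n * ζ) ^ 2‖ = ‖q‖ ^ n * ‖ζ‖ := by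
    intro n
    have hx : ‖q ^ n * ζ‖ < 1 := by
      rw [norm_mul, norm_pow]
      calc ‖q‖ ^ n * ‖ζ‖ ≤ 1 * ‖ζ‖ := by
            apply mul_le_mul_of_nonneg_right _ hζ0.le
            exact pow_le_one₀ hq0.le hq1.le
        _ < 1 := by simpa using hζu
    rw [norm_div, norm_pow, aux_norm_one_sub_small hx, norm_mul, norm_pow]
    simp
  have hn2 : ∀ n : ℕ, ‖q⁻¹ ^ (n + 1) * ζ / (1 - q⁻¹ ^ (n + 1) * ζ) ^ 2‖
      = ‖q‖ ^ (n + 1) * ‖ζ‖⁻¹ := by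
    intro n
    have hxnorm : ‖q⁻¹ ^ (n + 1) * ζ‖ = ‖ζ‖ / ‖q‖ ^ (n + 1) := by
      rw [norm_mul, norm_pow, norm_inv]
      field_simp
      rw [← mul_pow, one_div, inv_mul_cancel₀ hq0.ne', one_pow]
    have hx : 1 < ‖q⁻¹ ^ (n + 1) * ζ‖ := by
      rw [hxnorm, lt_div_iff₀ (by positivity), one_mul]
      calc ‖q‖ ^ (n + 1) ≤ ‖q‖ ^ 1 :=
            pow_le_pow_of_le_one hq0.le hq1.le (by omega)
        _ = ‖q‖ := pow_one _
        _ < ‖ζ‖ := hζl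
    rw [norm_div, norm_pow, aux_norm_one_sub_big hx, hxnorm]
    have hζne : ‖ζ‖ ≠ 0 := hζ0.ne'
    have hqne : (‖q‖ : ℝ) ^ (n + 1) ≠ 0 := by positivity
    field_simp
  have hn3 : ∀ n : ℕ, ‖((n + 1) • q ^ (n + 1)) / (1 - q ^ (n + 1))‖ ≤ ‖q‖ ^ (n + 1) := by
    intro n
    have hx : ‖q ^ (n + 1)‖ < 1 := by
      rw [norm_pow]; exact pow_lt_one₀ hq0.le hq1 (by omega)
    rw [norm_div, aux_norm_one_sub_small hx, div_one]
    calc ‖(n + 1) • q ^ (n + 1)‖ ≤ ‖q ^ (n + 1)‖ := IsUltrametricDist.norm_nsmul_le _ _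
      _ = ‖q‖ ^ (n + 1) := norm_pow _ _
  -- summability
  have hgeo : Summable fun n : ℕ => ‖q‖ ^ n := summable_geometric_of_lt_one hq0.le hq1
  have hs1 : Summable (fun n : ℕ => q ^ n * ζ / (1 - q ^ n * ζ) ^ 2) := by
    refine Summable.of_norm ?_
    simpa only [hn1] using hgeo.mul_right ‖ζ‖
  have hs2 : Summable (fun n : ℕ => q⁻¹ ^ (n + 1) * ζ / (1 - q⁻¹ ^ (n + 1) * ζ) ^ 2) := by
    refine Summable.of_norm ?_
    simp only [hn2]
    exact ((hgeo.mul_right ‖ζ‖⁻¹).mul_left ‖q‖).congr (fun n => by ring)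
  have hs3 : Summable (fun n : ℕ => ((n + 1) • q ^ (n + 1)) / (1 - q ^ (n + 1))) := by
    refine Summable.of_norm_bounded (hgeo.mul_left ‖q‖) (fun n => (hn3 n).trans_eq ?_)
    ring
  refine ⟨hs1, hs2, hs3, ?_⟩
  -- norm bounds for the three sums
  set C : ℝ := max ‖ζ‖ (‖q‖ * ‖ζ‖⁻¹) with hC
  have hC0 : 0 ≤ C := le_trans hζ0.le (le_max_left _ _)
  have hb1 : ‖∑' n : ℕ, q ^ n * ζ / (1 - q ^ n * ζ) ^ 2‖ ≤ C := by
    refine IsUltrametricDist.norm_tsum_le_of_forall_le_of_nonneg hC0 (fun n => ?_)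
    rw [hn1]
    refine le_trans ?_ (le_max_left _ _)
    calc ‖q‖ ^ n * ‖ζ‖ ≤ 1 * ‖ζ‖ :=
          mul_le_mul_of_nonneg_right (pow_le_one₀ hq0.le hq1.le) hζ0.le
      _ = ‖ζ‖ := one_mul _
  have hb2 : ‖∑' n : ℕ, q⁻¹ ^ (n + 1) * ζ / (1 - q⁻¹ ^ (n + 1) * ζ) ^ 2‖ ≤ C := by
    refine IsUltrametricDist.norm_tsum_le_of_forall_le_of_nonneg hC0 (fun n => ?_)
    rw [hn2]
    refine le_trans ?_ (le_max_right _ _)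
    have : ‖q‖ ^ (n + 1) ≤ ‖q‖ := by
      calc ‖q‖ ^ (n + 1) ≤ ‖q‖ ^ 1 := pow_le_pow_of_le_one hq0.le hq1.le (by omega)
        _ = ‖q‖ := pow_one _
    exact mul_le_mul_of_nonneg_right this (by positivity)
  have hb3 : ‖(2 : K) * ∑' n : ℕ, ((n + 1) • q ^ (n + 1)) / (1 - q ^ (n + 1))‖ ≤ C := by
    rw [norm_mul]
    have h2 : ‖(2 : K)‖ ≤ 1 := by
      have := IsUltrametricDist.norm_natCast_le_one K 2
      simpa using this
    have hsum : ‖∑' n : ℕ, ((n + 1) • q ^ (n + 1)) / (1 - q ^ (n + 1))‖ ≤ ‖q‖ := by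
      refine IsUltrametricDist.norm_tsum_le_of_forall_le_of_nonneg hq0.le (fun n => ?_)
      refine (hn3 n).trans ?_
      calc ‖q‖ ^ (n + 1) ≤ ‖q‖ ^ 1 := pow_le_pow_of_le_one hq0.le hq1.le (by omega)
        _ = ‖q‖ := pow_one _
    calc ‖(2 : K)‖ * ‖∑' n : ℕ, ((n + 1) • q ^ (n + 1)) / (1 - q ^ (n + 1))‖
        ≤ 1 * ‖q‖ := mul_le_mul h2 hsum (norm_nonneg _) zero_le_one
      _ = ‖q‖ := one_mul _
      _ ≤ ‖ζ‖ := hζl.le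
      _ ≤ C := le_max_left _ _
  calc ‖(∑' n : ℕ, q ^ n * ζ / (1 - q ^ n * ζ) ^ 2)
        + (∑' n : ℕ, q⁻¹ ^ (n + 1) * ζ / (1 - q⁻¹ ^ (n + 1) * ζ) ^ 2)
        - (2 : K) * ∑' n : ℕ, ((n + 1) • q ^ (n + 1)) / (1 - q ^ (n + 1))‖
      ≤ max ‖(∑' n : ℕ, q ^ n * ζ / (1 - q ^ n * ζ) ^ 2)
          + (∑' n : ℕ, q⁻¹ ^ (n + 1) * ζ / (1 - q⁻¹ ^ (n + 1) * ζ) ^ 2)‖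
          ‖(2 : K) * ∑' n : ℕ, ((n + 1) • q ^ (n + 1)) / (1 - q ^ (n + 1))‖ :=
        aux_norm_sub_le_max _ _
    _ ≤ C := by
        refine max_le ?_ hb3
        exact (IsUltrametricDist.norm_add_le_max _ _).trans (max_le hb1 hb2)
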